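/- Any sequence (u_n) in the Nehari manifold M_{λ,k} with J_{λ,k}(u_n) → c_{λ,k} is bounded in W^{1,p(x)}(R^N). -/

import Mathlib

open MeasureTheory Filter Topology

noncomputable section

/-- Euclidean space `ℝ^N`. -/
abbrev RN (N : ℕ) : Type := EuclideanSpace ℝ (Fin N)

/-- The point of `ℝ^N` with integer coordinates `z`. -/
def intPt {N : ℕ} (z : Fin N → ℤ) : RN N :=
  (EuclideanSpace.equiv (Fin N) ℝ).symm fun i => (z i : ℝ)

/-- `ℤ^N`-periodicity of a function on `ℝ^N`. -/
def ZPeriodic {N : ℕ} (h : RN N → ℝ) : Prop :=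
  ∀ (x : RN N) (z : Fin N → ℤ), h (x + intPt z) = h x

/-- The modular `ρ₁` of the variable exponent Sobolev space `W^{1,p(x)}(ℝ^N)`. -/
def rho1 {N : ℕ} (p : RN N → ℝ) (u : RN N → ℝ) : ℝ :=
  ∫ x, (‖gradient u x‖ ^ p x + |u x| ^ p x)

/-- Membership in the variable exponent Sobolev space `W^{1,p(x)}(ℝ^N)`. -/
def memW {N : ℕ} (p : RN N → ℝ) (u : RN N → ℝ) : Prop :=
  Measurable u ∧ Integrable (fun x => ‖gradient u x‖ ^ p x + |u x| ^ p x) (volume : Measure (RN N))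

/-- The Luxemburg-type norm of `W^{1,p(x)}(ℝ^N)`. -/
def WluxNorm {N : ℕ} (p : RN N → ℝ) (u : RN N → ℝ) : ℝ :=
  sInf {t : ℝ | 0 < t ∧ (∫ x, ((‖gradient u x‖ ^ p x + |u x| ^ p x) / t ^ p x)) ≤ 1}

/-- The energy functional `J_{λ,k}` associated with problem `(P_{λ,k})`. -/
def Jlk {N : ℕ} (p q r f g : RN N → ℝ) (lam : ℝ) (k : ℕ) (u : RN N → ℝ) : ℝ :=
  (∫ x, (1 / p x) * (‖gradient u x‖ ^ p x + |u x| ^ p x))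
    - lam * (∫ x, (g ((k : ℝ)⁻¹ • x) / q x) * |u x| ^ q x)
    - ∫ x, (f ((k : ℝ)⁻¹ • x) / r x) * |u x| ^ r x

/-- The Gâteaux derivative `J'_{λ,k}(u)v`. -/
def dJlk {N : ℕ} (p q r f g : RN N → ℝ) (lam : ℝ) (k : ℕ) (u v : RN N → ℝ) : ℝ :=
  (∫ x, (‖gradient u x‖ ^ (p x - 2) * (inner ℝ (gradient u x) (gradient v x) : ℝ)
      + |u x| ^ (p x - 2) * u x * v x))
    - lam * (∫ x, g ((k : ℝ)⁻¹ • x) * |u x| ^ (q x - 2) * u x * v x)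
    - ∫ x, f ((k : ℝ)⁻¹ • x) * |u x| ^ (r x - 2) * u x * v x

/-- The derivative `E'_{λ,k}(u)v` of the map `E_{λ,k}(u) = J'_{λ,k}(u)u`. -/
def dElk {N : ℕ} (p q r f g : RN N → ℝ) (lam : ℝ) (k : ℕ) (u v : RN N → ℝ) : ℝ :=
  (∫ x, p x * (‖gradient u x‖ ^ (p x - 2) * (inner ℝ (gradient u x) (gradient v x) : ℝ)
      + |u x| ^ (p x - 2) * u x * v x))
    - lam * (∫ x, q x * (g ((k : ℝ)⁻¹ • x) * |u x| ^ (q x - 2) * u x * v x))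
    - ∫ x, r x * (f ((k : ℝ)⁻¹ • x) * |u x| ^ (r x - 2) * u x * v x)

/-- The Nehari manifold `M_{λ,k}`. -/
def nehari {N : ℕ} (p q r f g : RN N → ℝ) (lam : ℝ) (k : ℕ) (u : RN N → ℝ) : Prop :=
  memW p u ∧ ¬ (u =ᵐ[(volume : Measure (RN N))] 0) ∧ dJlk p q r f g lam k u u = 0

/-- The Nehari level `c_{λ,k}`. -/
def clk {N : ℕ} (p q r f g : RN N → ℝ) (lam : ℝ) (k : ℕ) : ℝ :=
  sInf ((Jlk p q r f g lam k) '' {u | nehari p q r f g lam k u})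

/-- Limit-type functional with weight `w` in front of the `r(x)`-term. -/
def Jw {N : ℕ} (p r w : RN N → ℝ) (u : RN N → ℝ) : ℝ :=
  (∫ x, (1 / p x) * (‖gradient u x‖ ^ p x + |u x| ^ p x))
    - ∫ x, (w x / r x) * |u x| ^ r x

/-- Derivative of the limit-type functional. -/
def dJw {N : ℕ} (p r w : RN N → ℝ) (u v : RN N → ℝ) : ℝ :=
  (∫ x, (‖gradient u x‖ ^ (p x - 2) * (inner ℝ (gradient u x) (gradient v x) : ℝ)
      + |u x| ^ (p x - 2) * u x * v x))
    - ∫ x, w x * |u x| ^ (r x - 2) * u x * v x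

/-- Nehari manifold of the limit-type functional. -/
def nehariW {N : ℕ} (p r w : RN N → ℝ) (u : RN N → ℝ) : Prop :=
  memW p u ∧ ¬ (u =ᵐ[(volume : Measure (RN N))] 0) ∧ dJw p r w u u = 0

/-- Nehari level of the limit-type functional. -/
def cW {N : ℕ} (p r w : RN N → ℝ) : ℝ :=
  sInf ((Jw p r w) '' {u | nehariW p r w u})


private lemma rpow_aux {a c : ℝ} (ha : 0 ≤ a) (hc : c ≠ 0) :
    a ^ (c - 2) * a * a = a ^ c := by
  rcases ha.eq_or_lt with h | h
  · rw [← h]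
    simp [Real.zero_rpow hc]
  · have h0 : a ≠ 0 := h.ne'
    have e2 : c - 2 + 1 + 1 = c := by ring
    rw [← Real.rpow_add_one h0, ← Real.rpow_add_one h0, e2]

/-- minimizing sequences on the Nehari manifold are bounded in
`W^{1,p(x)}(ℝ^N)`. -/
theorem minimizing_sequence_bounded {N : ℕ} (p q r f g : RN N → ℝ) (lam : ℝ) (k : ℕ)
    (pp qm : ℝ)
    (hpm : Measurable p) (hqm : Measurable q) (hrm : Measurable r)
    (hfc : Continuous f) (hgc : Continuous g)
    (hf0 : ∀ x, 0 ≤ f x) (hf1 : ∀ x, f x ≤ 1) (hg0 : ∀ x, 0 ≤ g x)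
    (hgb : ∃ Cg : ℝ, ∀ x, g x ≤ Cg) (hlam : 0 ≤ lam)
    (hp : ∀ᵐ x : RN N, 1 < p x ∧ p x ≤ pp) (hppqm : pp < qm) (hpp : 0 < pp)
    (hq : ∀ᵐ x : RN N, qm ≤ q x ∧ q x ≤ r x)
    (u : ℕ → RN N → ℝ) (hu : ∀ n, nehari p q r f g lam k (u n))
    (hig : ∀ n, Integrable (fun x => g ((k : ℝ)⁻¹ • x) * |u n x| ^ q x) (volume : Measure (RN N)))
    (hif : ∀ n, Integrable (fun x => f ((k : ℝ)⁻¹ • x) * |u n x| ^ r x) (volume : Measure (RN N)))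
    (hmin : Tendsto (fun n => Jlk p q r f g lam k (u n)) atTop (nhds (clk p q r f g lam k))) :
    ∃ C : ℝ, ∀ n, WluxNorm p (u n) ≤ C := by
  classical
  -- the "stuff" integrand
  set stf : ℕ → RN N → ℝ := fun n x => ‖gradient (u n) x‖ ^ p x + |u n x| ^ p x with hstf
  have hstf_int : ∀ n, Integrable (stf n) (volume : Measure (RN N)) := fun n => (hu n).1.2
  have hstf_nonneg : ∀ n x, 0 ≤ stf n x := fun n x =>
    add_nonneg (Real.rpow_nonneg (norm_nonneg _) _) (Real.rpow_nonneg (abs_nonneg _) _)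
  have hrho_def : ∀ n, rho1 p (u n) = ∫ x, stf n x := fun n => rfl
  have hrho_nonneg : ∀ n, 0 ≤ rho1 p (u n) := fun n =>
    integral_nonneg (hstf_nonneg n)
  have hqpos : 0 < qm := hpp.trans hppqm
  -- a.e. positivity facts
  have hae : ∀ᵐ x : RN N, (1 < p x ∧ p x ≤ pp) ∧ (qm ≤ q x ∧ q x ≤ r x) := hp.and hq
  -- Nehari identity : rho1 = lam * G + F
  have hkey : ∀ n, rho1 p (u n)
      = lam * (∫ x, g ((k : ℝ)⁻¹ • x) * |u n x| ^ q x)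
        + ∫ x, f ((k : ℝ)⁻¹ • x) * |u n x| ^ r x := by
    intro n
    have h0 := (hu n).2.2
    unfold dJlk at h0
    have e1 : (∫ x, (‖gradient (u n) x‖ ^ (p x - 2)
          * (inner ℝ (gradient (u n) x) (gradient (u n) x) : ℝ)
          + |u n x| ^ (p x - 2) * u n x * u n x)) = rho1 p (u n) := by
      rw [hrho_def]
      refine integral_congr_ae ?_
      filter_upwards [hae] with x hx
      have hp1 : p x ≠ 0 := by linarith [hx.1.1]
      have huu : u n x * u n x = |u n x| * |u n x| := (abs_mul_abs_self _).symm
      rw [real_inner_self_eq_norm_mul_norm, ← mul_assoc, mul_assoc _ (u n x) (u n x), huu,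
        ← mul_assoc]
      rw [rpow_aux (norm_nonneg _) hp1, rpow_aux (abs_nonneg _) hp1]
    have e2 : (∫ x, g ((k : ℝ)⁻¹ • x) * |u n x| ^ (q x - 2) * u n x * u n x)
        = ∫ x, g ((k : ℝ)⁻¹ • x) * |u n x| ^ q x := by
      refine integral_congr_ae ?_
      filter_upwards [hae] with x hx
      have hq1 : q x ≠ 0 := by linarith [hx.2.1, hqpos]
      have huu : u n x * u n x = |u n x| * |u n x| := (abs_mul_abs_self _).symm
      rw [mul_assoc _ (u n x) (u n x), huu, mul_assoc, ← mul_assoc (|u n x| ^ (q x - 2)),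
        rpow_aux (abs_nonneg _) hq1]
    have e3 : (∫ x, f ((k : ℝ)⁻¹ • x) * |u n x| ^ (r x - 2) * u n x * u n x)
        = ∫ x, f ((k : ℝ)⁻¹ • x) * |u n x| ^ r x := by
      refine integral_congr_ae ?_
      filter_upwards [hae] with x hx
      have hr1 : r x ≠ 0 := by linarith [hx.2.1, hx.2.2, hqpos]
      have huu : u n x * u n x = |u n x| * |u n x| := (abs_mul_abs_self _).symm
      rw [mul_assoc _ (u n x) (u n x), huu, mul_assoc, ← mul_assoc (|u n x| ^ (r x - 2)),
        rpow_aux (abs_nonneg _) hr1]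
    rw [e1, e2, e3] at h0
    linarith
  -- measurability helpers
  have hgk_meas : Measurable (fun x : RN N => g ((k : ℝ)⁻¹ • x)) :=
    (hgc.comp (continuous_id.const_smul ((k : ℝ)⁻¹))).measurable
  have hfk_meas : Measurable (fun x : RN N => f ((k : ℝ)⁻¹ • x)) :=
    (hfc.comp (continuous_id.const_smul ((k : ℝ)⁻¹))).measurable
  -- lower bound for the first integral in Jlk
  have hA : ∀ n, (1 / pp) * rho1 p (u n) ≤ ∫ x, (1 / p x) * stf n x := by
    intro n
    have hint : Integrable (fun x => (1 / p x) * stf n x) (volume : Measure (RN N)) := by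
      refine (hstf_int n).mono' ?_ ?_
      · exact ((hpm.const_div 1).aemeasurable.aestronglyMeasurable.mul
          (hstf_int n).aestronglyMeasurable)
      · filter_upwards [hae] with x hx
        have h1 : 0 < p x := lt_trans one_pos hx.1.1
        have h2 : 1 / p x ≤ 1 := by
          rw [div_le_one h1]; linarith [hx.1.1]
        have h3 : 0 ≤ 1 / p x := le_of_lt (by positivity)
        rw [Real.norm_eq_abs, abs_mul, abs_of_nonneg h3, abs_of_nonneg (hstf_nonneg n x)]
        calc 1 / p x * stf n x ≤ 1 * stf n x :=
              mul_le_mul_of_nonneg_right h2 (hstf_nonneg n x)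
          _ = stf n x := one_mul _
    have : (∫ x, (1 / pp) * stf n x) ≤ ∫ x, (1 / p x) * stf n x := by
      refine integral_mono_ae ((hstf_int n).const_mul _) hint ?_
      filter_upwards [hae] with x hx
      have h1 : 0 < p x := lt_trans one_pos hx.1.1
      exact mul_le_mul_of_nonneg_right (one_div_le_one_div_of_le h1 hx.1.2) (hstf_nonneg n x)
    rwa [integral_const_mul, ← hrho_def] at this
  -- upper bound for the g-integral
  have hB : ∀ n, (∫ x, (g ((k : ℝ)⁻¹ • x) / q x) * |u n x| ^ q x)
      ≤ (1 / qm) * ∫ x, g ((k : ℝ)⁻¹ • x) * |u n x| ^ q x := by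
    intro n
    have hbnd : ∀ᵐ x : RN N, (g ((k : ℝ)⁻¹ • x) / q x) * |u n x| ^ q x
        ≤ (1 / qm) * (g ((k : ℝ)⁻¹ • x) * |u n x| ^ q x) := by
      filter_upwards [hae] with x hx
      have hdiv : g ((k : ℝ)⁻¹ • x) / q x ≤ g ((k : ℝ)⁻¹ • x) / qm :=
        div_le_div_of_nonneg_left (hg0 _) hqpos hx.2.1
      calc (g ((k : ℝ)⁻¹ • x) / q x) * |u n x| ^ q x
          ≤ (g ((k : ℝ)⁻¹ • x) / qm) * |u n x| ^ q x :=
            mul_le_mul_of_nonneg_right hdiv (Real.rpow_nonneg (abs_nonneg _) _)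
        _ = (1 / qm) * (g ((k : ℝ)⁻¹ • x) * |u n x| ^ q x) := by ring
    have hint : Integrable (fun x => (g ((k : ℝ)⁻¹ • x) / q x) * |u n x| ^ q x)
        (volume : Measure (RN N)) := by
      refine ((hig n).const_mul (1 / qm)).mono' ?_ ?_
      · exact ((hgk_meas.div hqm).mul ((hu n).1.1.abs.pow hqm)).aestronglyMeasurable
      · filter_upwards [hbnd, hae] with x hx1 hx2
        have h0 : 0 ≤ (g ((k : ℝ)⁻¹ • x) / q x) * |u n x| ^ q x := by
          have : 0 < q x := lt_of_lt_of_le hqpos hx2.2.1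
          have := hg0 ((k : ℝ)⁻¹ • x)
          positivity
        rw [Real.norm_eq_abs, abs_of_nonneg h0]
        exact hx1
    have := integral_mono_ae hint ((hig n).const_mul (1 / qm)) hbnd
    rwa [integral_const_mul] at this
  -- upper bound for the f-integral
  have hC : ∀ n, (∫ x, (f ((k : ℝ)⁻¹ • x) / r x) * |u n x| ^ r x)
      ≤ (1 / qm) * ∫ x, f ((k : ℝ)⁻¹ • x) * |u n x| ^ r x := by
    intro n
    have hbnd : ∀ᵐ x : RN N, (f ((k : ℝ)⁻¹ • x) / r x) * |u n x| ^ r x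
        ≤ (1 / qm) * (f ((k : ℝ)⁻¹ • x) * |u n x| ^ r x) := by
      filter_upwards [hae] with x hx
      have hqr : qm ≤ r x := le_trans hx.2.1 hx.2.2
      have hdiv : f ((k : ℝ)⁻¹ • x) / r x ≤ f ((k : ℝ)⁻¹ • x) / qm :=
        div_le_div_of_nonneg_left (hf0 _) hqpos hqr
      calc (f ((k : ℝ)⁻¹ • x) / r x) * |u n x| ^ r x
          ≤ (f ((k : ℝ)⁻¹ • x) / qm) * |u n x| ^ r x :=
            mul_le_mul_of_nonneg_right hdiv (Real.rpow_nonneg (abs_nonneg _) _)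
        _ = (1 / qm) * (f ((k : ℝ)⁻¹ • x) * |u n x| ^ r x) := by ring
    have hint : Integrable (fun x => (f ((k : ℝ)⁻¹ • x) / r x) * |u n x| ^ r x)
        (volume : Measure (RN N)) := by
      refine ((hif n).const_mul (1 / qm)).mono' ?_ ?_
      · exact ((hfk_meas.div hrm).mul ((hu n).1.1.abs.pow hrm)).aestronglyMeasurable
      · filter_upwards [hbnd, hae] with x hx1 hx2
        have h0 : 0 ≤ (f ((k : ℝ)⁻¹ • x) / r x) * |u n x| ^ r x := by
          have : 0 < r x := lt_of_lt_of_le hqpos (le_trans hx2.2.1 hx2.2.2)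
          have := hf0 ((k : ℝ)⁻¹ • x)
          positivity
        rw [Real.norm_eq_abs, abs_of_nonneg h0]
        exact hx1
    have := integral_mono_ae hint ((hif n).const_mul (1 / qm)) hbnd
    rwa [integral_const_mul] at this
  -- lower bound for Jlk in terms of rho1
  have hJ : ∀ n, (1 / pp - 1 / qm) * rho1 p (u n) ≤ Jlk p q r f g lam k (u n) := by
    intro n
    have h1 := hA n
    have h2 := mul_le_mul_of_nonneg_left (hB n) hlam
    have h3 := hC n
    have h4 := hkey n
    unfold Jlk
    rw [hstf] at h1
    have h5 : (1 / qm) * rho1 p (u n)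
        = (1 / qm) * (lam * ∫ x, g ((k : ℝ)⁻¹ • x) * |u n x| ^ q x)
          + (1 / qm) * ∫ x, f ((k : ℝ)⁻¹ • x) * |u n x| ^ r x := by
      rw [h4]; ring
    have e : lam * ((1 / qm) * ∫ x, g ((k : ℝ)⁻¹ • x) * |u n x| ^ q x)
        = (1 / qm) * (lam * ∫ x, g ((k : ℝ)⁻¹ • x) * |u n x| ^ q x) := by ring
    rw [e] at h2
    linarith [h1, h2, h3, h5]
  -- the sequence Jlk (u n) is bounded above
  obtain ⟨B, hBd⟩ := hmin.bddAbove_range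
  have hBub : ∀ n, Jlk p q r f g lam k (u n) ≤ B := fun n =>
    hBd ⟨n, rfl⟩
  have hdelta : 0 < 1 / pp - 1 / qm := by
    have : 1 / qm < 1 / pp := one_div_lt_one_div_of_lt hpp hppqm
    linarith
  -- rho1 bounded
  have hrho_bdd : ∀ n, rho1 p (u n) ≤ B / (1 / pp - 1 / qm) := by
    intro n
    rw [le_div_iff₀ hdelta]
    calc rho1 p (u n) * (1 / pp - 1 / qm) = (1 / pp - 1 / qm) * rho1 p (u n) := by ring
      _ ≤ Jlk p q r f g lam k (u n) := hJ n
      _ ≤ B := hBub n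
  refine ⟨B / (1 / pp - 1 / qm) + 1, fun n => ?_⟩
  set t : ℝ := rho1 p (u n) + 1 with ht
  have htpos : (0:ℝ) < t := by have := hrho_nonneg n; rw [ht]; linarith
  have ht1 : (1:ℝ) ≤ t := by have := hrho_nonneg n; rw [ht]; linarith
  have hmem : t ∈ {s : ℝ | 0 < s ∧
      (∫ x, ((‖gradient (u n) x‖ ^ p x + |u n x| ^ p x) / s ^ p x)) ≤ 1} := by
    refine ⟨htpos, ?_⟩
    have htp_ge : ∀ᵐ x : RN N, t ≤ t ^ p x := by
      filter_upwards [hae] with x hx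
      calc t = t ^ (1:ℝ) := (Real.rpow_one t).symm
        _ ≤ t ^ p x := Real.rpow_le_rpow_of_exponent_le ht1 (le_of_lt hx.1.1)
    have hint : Integrable (fun x => stf n x / t ^ p x) (volume : Measure (RN N)) := by
      refine (hstf_int n).mono' ?_ ?_
      · exact ((hstf_int n).aestronglyMeasurable.aemeasurable.div
          ((measurable_const.pow hpm).aemeasurable)).aestronglyMeasurable
      · filter_upwards [htp_ge] with x hx
        have htp_pos : 0 < t ^ p x := lt_of_lt_of_le htpos hx
        have h0 : 0 ≤ stf n x / t ^ p x := div_nonneg (hstf_nonneg n x) htp_pos.le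
        rw [Real.norm_eq_abs, abs_of_nonneg h0]
        calc stf n x / t ^ p x ≤ stf n x / 1 :=
              div_le_div_of_nonneg_left (hstf_nonneg n x) one_pos (le_trans ht1 hx)
          _ = stf n x := div_one _
    have hmono : (∫ x, stf n x / t ^ p x) ≤ ∫ x, stf n x / t := by
      refine integral_mono_ae hint ((hstf_int n).div_const t) ?_
      filter_upwards [htp_ge] with x hx
      exact div_le_div_of_nonneg_left (hstf_nonneg n x) htpos hx
    have : (∫ x, stf n x / t) = rho1 p (u n) / t := by
      rw [integral_div, ← hrho_def]
    calc (∫ x, ((‖gradient (u n) x‖ ^ p x + |u n x| ^ p x) / t ^ p x))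
        = ∫ x, stf n x / t ^ p x := rfl
      _ ≤ ∫ x, stf n x / t := hmono
      _ = rho1 p (u n) / t := this
      _ ≤ 1 := by
          rw [div_le_one htpos, ht]; linarith
  have hbb : BddBelow {s : ℝ | 0 < s ∧
      (∫ x, ((‖gradient (u n) x‖ ^ p x + |u n x| ^ p x) / s ^ p x)) ≤ 1} :=
    ⟨0, fun s hs => hs.1.le⟩
  calc WluxNorm p (u n) ≤ t := csInf_le hbb hmem
    _ ≤ B / (1 / pp - 1 / qm) + 1 := by
        rw [ht]; linarith [hrho_bdd n]
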